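/- Let p < q be positive integers, let r = q - p, and suppose gcd(p - q, p + q) = 1. Let m be the common remainder of p and q upon division by r (i.e., m = p mod r = q mod r), and let n = r - m. Then gcd(m - n, m + n) = 1. -/

import Mathlib

/-- Let `p < q` be positive integers with `gcd(p - q, p + q) = 1`, let `r = q - p`,
let `m = p % r = q % r` be the common remainder of `p` and `q` upon division by `r`,
and let `n = r - m`. Then `gcd(m - n, m + n) = 1`. -/
theorem folded_pair_coprime (p q r m n : ℤ) (hp : 0 < p) (hpq : p < q)
    (hcop : Int.gcd (p - q) (p + q) = 1)
    (hr : r = q - p) (hm : m = p % r) (hm' : m = q % r) (hn : n = r - m) :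
    Int.gcd (m - n) (m + n) = 1 := by
  rw [← Int.isCoprime_iff_gcd_eq_one] at hcop ⊢
  obtain ⟨a, b, hab⟩ := hcop
  have hk : m = p + r * (-(p / r)) := by
    rw [hm, Int.emod_def]; ring
  set k : ℤ := -(p / r) with hkdef
  refine ⟨b, b - a - b * (2 * k - 1), ?_⟩
  subst hn hr
  rw [hk]
  linear_combination hab
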